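/- Let Y = {(a,b,m) : a,b ∈ ℚ, a < b, m ∈ ℤ/4ℤ} with relations: R((a,b,m),(c,d,n)) iff (a,b) = (c,d) and n = m+1; E((a,b,m),(c,d,n)) iff (a,b)_m = (c,d)_n and |{a,b} ∩ {c,d}| = 1, where (a,b)_m denotes a if m ∈ {0,2} and b if m ∈ {1,3}; and N((a,b,m),(c,d,n)) iff {a,b} ∩ {c,d} = ∅. Let V be the set of 2-element subsets of ℚ and π : Y → V, π(a,b,m) = {a,b}. Then: (1) every map e : Y → Y preserving R, E, N satisfies π(u) = π(v) ⟹ π(e(u)) = π(e(v)); (2) the induced map ē on V (ē({a,b}) := π(e(a,b,0)) for a < b) satisfies: |x ∩ y| = 1 implies |ē(x) ∩ ē(y)| = 1, and x ∩ y = ∅ implies ē(x) ∩ ē(y) = ∅; and (3) for every permutation α of ℚ there exists a bijection γ : Y → Y such that γ and γ⁻¹ both preserve R, E, N and π(γ(y)) = {α(a), α(b)} whenever π(y) = {a,b}. -/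

import Mathlib

/-- Triples `(a, b, m)` with `a, b ∈ ℚ` and `m ∈ ℤ/4ℤ`. -/
abbrev Trip : Type := ℚ × ℚ × ZMod 4

/-- `(a,b)_m`: equal to `a` if `m ∈ {0,2}` and to `b` if `m ∈ {1,3}`. -/
def selCoord (p : Trip) : ℚ := if p.2.2 = 0 ∨ p.2.2 = 2 then p.1 else p.2.1

/-- The unordered pair `{a, b}` associated with a triple `(a, b, m)`. -/
def pairOf (p : Trip) : Finset ℚ := {p.1, p.2.1}

/-- `R((a,b,m),(c,d,n))` iff `(a,b) = (c,d)` and `n = m + 1`. -/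
def Rrel (u v : Trip) : Prop := u.1 = v.1 ∧ u.2.1 = v.2.1 ∧ v.2.2 = u.2.2 + 1

/-- `E((a,b,m),(c,d,n))` iff `(a,b)_m = (c,d)_n` and `|{a,b} ∩ {c,d}| = 1`. -/
def Erel (u v : Trip) : Prop := selCoord u = selCoord v ∧ (pairOf u ∩ pairOf v).card = 1

/-- `N((a,b,m),(c,d,n))` iff `{a,b} ∩ {c,d} = ∅`. -/
def Nrel (u v : Trip) : Prop := pairOf u ∩ pairOf v = ∅

/-- The domain `Y` of triples `(a, b, m)` with `a < b`. -/
abbrev Ydom : Type := {p : Trip // p.1 < p.2.1}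

/-- A map `Y → Y` preserving the relations `R`, `E`, `N`. -/
def IsHomY (e : Ydom → Ydom) : Prop :=
  (∀ u v : Ydom, Rrel u.1 v.1 → Rrel (e u).1 (e v).1) ∧
  (∀ u v : Ydom, Erel u.1 v.1 → Erel (e u).1 (e v).1) ∧
  (∀ u v : Ydom, Nrel u.1 v.1 → Nrel (e u).1 (e v).1)

/-- The vertex set of the Johnson graph: 2-element subsets of ℚ. -/
abbrev JVert : Type := {s : Finset ℚ // s.card = 2}

/-- The projection `π : Y → V`, `(a, b, m) ↦ {a, b}`. -/
def piY (y : Ydom) : JVert := ⟨{y.1.1, y.1.2.1}, Finset.card_pair (ne_of_lt y.2)⟩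

/-- A canonical section of `π`: the 2-element set `{a, b}` with `a < b` is sent
to `(a, b, 0)`. -/
def toY (x : JVert) : Ydom :=
  ⟨(x.1.min' (Finset.card_pos.mp (by rw [x.2]; norm_num)),
    x.1.max' (Finset.card_pos.mp (by rw [x.2]; norm_num)), (0 : ZMod 4)),
   Finset.min'_lt_max'_of_card x.1 (by rw [x.2]; norm_num)⟩

-- aux lemmas
lemma pair_eq_iff {a b c d : ℚ} (hab : a < b) (hcd : c < d)
    (h : ({a,b} : Finset ℚ) = {c,d}) : a = c ∧ b = d := by
  have ha : a = c ∨ a = d := by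
    have : a ∈ ({c,d} : Finset ℚ) := by rw [← h]; simp
    simpa using this
  have hb : b = c ∨ b = d := by
    have : b ∈ ({c,d} : Finset ℚ) := by rw [← h]; simp
    simpa using this
  rcases ha with rfl|rfl <;> rcases hb with h1|h1 <;>
    first
      | exact ⟨rfl, h1⟩
      | (exfalso; linarith)

lemma piY_val (y : Ydom) : (piY y).1 = pairOf y.1 := rfl

lemma toY_pair (x : JVert) : pairOf (toY x).1 = x.1 := by
  apply Finset.eq_of_subset_of_card_le
  · intro t ht
    simp only [pairOf, toY, Finset.mem_insert, Finset.mem_singleton] at ht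
    rcases ht with rfl|rfl
    · exact x.1.min'_mem _
    · exact x.1.max'_mem _
  · rw [x.2, pairOf]
    rw [Finset.card_pair (ne_of_lt (toY x).2)]

lemma hom_kernel (e : Ydom → Ydom) (he : IsHomY e) :
    ∀ u v : Ydom, piY u = piY v → piY (e u) = piY (e v) := by
  intro u v huv
  obtain ⟨⟨a, b, m⟩, hab⟩ := u
  obtain ⟨⟨a', b', n⟩, hab'⟩ := v
  have hpq : ({a,b} : Finset ℚ) = {a',b'} := congrArg Subtype.val huv
  obtain ⟨h1, h2⟩ := pair_eq_iff hab hab' hpq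
  subst h1; subst h2
  set P : ZMod 4 → JVert := fun k => piY (e ⟨(a, b, k), hab⟩) with hP
  have step : ∀ k, P k = P (k + 1) := by
    intro k
    have hr : Rrel (a,b,k) (a,b,k+1) := ⟨rfl, rfl, rfl⟩
    obtain ⟨g1, g2, _⟩ := he.1 ⟨(a,b,k),hab⟩ ⟨(a,b,k+1),hab⟩ hr
    apply Subtype.ext
    show ({_,_} : Finset ℚ) = {_,_}
    rw [g1, g2]
  have key : ∀ k : ZMod 4, P k = P 0 := by
    have e01 : P 0 = P 1 := by simpa using step 0
    have e12 : P 1 = P 2 := by simpa [show (1:ZMod 4) + 1 = 2 by decide] using step 1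
    have e23 : P 2 = P 3 := by simpa [show (2:ZMod 4) + 1 = 3 by decide] using step 2
    intro k
    have h4 : k = 0 ∨ k = 1 ∨ k = 2 ∨ k = 3 := by
      revert k; decide
    rcases h4 with rfl|rfl|rfl|rfl
    · rfl
    · rw [← e01]
    · rw [← e12, ← e01]
    · rw [← e23, ← e12, ← e01]
  show P m = P n
  rw [key m, key n]

lemma sel_pick {a b : ℚ} (t : ℚ) (ht : t = a ∨ t = b) (hab : a < b) :
    selCoord (a, b, if t = a then (0 : ZMod 4) else 1) = t := by
  unfold selCoord
  by_cases h : t = a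
  · simp [h]
  · have hb : t = b := ht.resolve_left h
    have : ¬ ((if t = a then (0:ZMod 4) else 1) = 0 ∨ (if t = a then (0:ZMod 4) else 1) = 2) := by
      rw [if_neg h]; decide
    simp only [this, if_false, if_neg h]
    exact hb.symm ▸ rfl

lemma johnson_part (e : Ydom → Ydom) (he : IsHomY e) (x y : JVert) :
    ((x.1 ∩ y.1).card = 1 →
      ((piY (e (toY x))).1 ∩ (piY (e (toY y))).1).card = 1) ∧
    (x.1 ∩ y.1 = ∅ → (piY (e (toY x))).1 ∩ (piY (e (toY y))).1 = ∅) := by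
  constructor
  · intro hcard
    obtain ⟨t, ht⟩ := Finset.card_eq_one.mp hcard
    have htx : t ∈ x.1 := by
      have : t ∈ x.1 ∩ y.1 := ht ▸ Finset.mem_singleton_self t
      exact (Finset.mem_inter.mp this).1
    have hty : t ∈ y.1 := by
      have : t ∈ x.1 ∩ y.1 := ht ▸ Finset.mem_singleton_self t
      exact (Finset.mem_inter.mp this).2
    -- names
    set a := (toY x).1.1 with hadef
    set b := (toY x).1.2.1 with hbdef
    set c := (toY y).1.1 with hcdef
    set d := (toY y).1.2.1 with hddef
    have hab : a < b := (toY x).2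
    have hcd : c < d := (toY y).2
    have hx : pairOf (toY x).1 = x.1 := toY_pair x
    have hy : pairOf (toY y).1 = y.1 := toY_pair y
    have htab : t = a ∨ t = b := by
      have : t ∈ pairOf (toY x).1 := hx ▸ htx
      simpa [pairOf] using this
    have htcd : t = c ∨ t = d := by
      have : t ∈ pairOf (toY y).1 := hy ▸ hty
      simpa [pairOf] using this
    set m : ZMod 4 := if t = a then 0 else 1 with hm
    set n : ZMod 4 := if t = c then 0 else 1 with hn
    set u : Ydom := ⟨(a, b, m), hab⟩ with hu
    set v : Ydom := ⟨(c, d, n), hcd⟩ with hv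
    have hpx : pairOf u.1 = x.1 := hx
    have hpy : pairOf v.1 = y.1 := hy
    have hE : Erel u.1 v.1 := by
      refine ⟨?_, ?_⟩
      · rw [show selCoord u.1 = t from sel_pick t htab hab,
           show selCoord v.1 = t from sel_pick t htcd hcd]
      · rw [hpx, hpy]; exact hcard
    have hres := he.2.1 u v hE
    have hker1 : piY (e u) = piY (e (toY x)) := by
      apply hom_kernel e he
      exact Subtype.ext rfl
    have hker2 : piY (e v) = piY (e (toY y)) := by
      apply hom_kernel e he
      exact Subtype.ext rfl
    rw [← hker1, ← hker2, piY_val, piY_val]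
    exact hres.2
  · intro hemp
    have hN : Nrel (toY x).1 (toY y).1 := by
      unfold Nrel
      rw [toY_pair, toY_pair]; exact hemp
    have := he.2.2 (toY x) (toY y) hN
    rw [piY_val, piY_val]
    exact this

def liftMap (α : Equiv.Perm ℚ) (c : ZMod 4) (y : Ydom) : Ydom :=
  if h : α y.1.1 < α y.1.2.1 then ⟨(α y.1.1, α y.1.2.1, y.1.2.2), h⟩
  else ⟨(α y.1.2.1, α y.1.1, y.1.2.2 + c),
    lt_of_le_of_ne (not_lt.mp h)
      (fun hx => absurd (α.injective hx) (ne_of_gt y.2))⟩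

lemma liftMap_pair (α : Equiv.Perm ℚ) (c : ZMod 4) (y : Ydom) :
    pairOf (liftMap α c y).1 = (pairOf y.1).image α := by
  unfold liftMap pairOf
  split <;> simp [Finset.image_insert, Finset.image_singleton, Finset.pair_comm]

lemma parity_fact {c : ZMod 4} (hc : c = 1 ∨ c = 3) (m : ZMod 4) :
    (m + c = 0 ∨ m + c = 2) ↔ ¬(m = 0 ∨ m = 2) := by
  rcases hc with rfl | rfl <;> revert m <;> decide

lemma liftMap_sel (α : Equiv.Perm ℚ) {c : ZMod 4} (hc : c = 1 ∨ c = 3) (y : Ydom) :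
    selCoord (liftMap α c y).1 = α (selCoord y.1) := by
  obtain ⟨⟨a, b, m⟩, hab⟩ := y
  unfold liftMap selCoord
  by_cases h : α a < α b
  · rw [dif_pos h]
    dsimp only
    rw [apply_ite α]
  · rw [dif_neg h]
    dsimp only
    rw [apply_ite α]
    by_cases hm : m = 0 ∨ m = 2
    · rw [if_pos hm, if_neg (by rw [parity_fact hc]; exact not_not.mpr hm)]
    · rw [if_neg hm, if_pos ((parity_fact hc m).mpr hm)]

lemma liftMap_isHom (α : Equiv.Perm ℚ) {c : ZMod 4} (hc : c = 1 ∨ c = 3) :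
    IsHomY (liftMap α c) := by
  refine ⟨?_, ?_, ?_⟩
  · rintro ⟨⟨a, b, m⟩, hab⟩ ⟨⟨a', b', n⟩, hab'⟩ ⟨h1, h2, h3⟩
    dsimp only at h1 h2 h3
    subst h1; subst h2; subst h3
    unfold liftMap Rrel
    by_cases h : α a < α b
    · rw [dif_pos h, dif_pos h]
      exact ⟨rfl, rfl, rfl⟩
    · rw [dif_neg h, dif_neg h]
      exact ⟨rfl, rfl, by dsimp only; ring⟩
  · rintro u v ⟨h1, h2⟩
    refine ⟨?_, ?_⟩
    · rw [liftMap_sel α hc, liftMap_sel α hc, h1]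
    · rw [liftMap_pair, liftMap_pair, ← Finset.image_inter _ _ α.injective,
        Finset.card_image_of_injective _ α.injective, h2]
  · intro u v h
    unfold Nrel at h ⊢
    rw [liftMap_pair, liftMap_pair, ← Finset.image_inter _ _ α.injective, h,
      Finset.image_empty]

lemma liftMap_leftInv (α β : Equiv.Perm ℚ) (hβ : ∀ q, β (α q) = q)
    {c c' : ZMod 4} (h : c + c' = 0) :
    Function.LeftInverse (liftMap β c') (liftMap α c) := by
  rintro ⟨⟨a, b, m⟩, hab⟩
  unfold liftMap
  by_cases hlt : α a < α b
  · rw [dif_pos hlt]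
    dsimp only
    rw [dif_pos (show β (α a) < β (α b) by rw [hβ, hβ]; exact hab)]
    exact Subtype.ext (by simp [hβ])
  · rw [dif_neg hlt]
    dsimp only
    rw [dif_neg (show ¬ (β (α b) < β (α a)) by rw [hβ, hβ]; exact not_lt.mpr hab.le)]
    apply Subtype.ext
    simp [Prod.ext_iff, hβ, add_assoc, h]


/-- `π : 𝔜 → 𝔍` is a finite covering map: (1) every endomorphism `e` of `𝔜` preserves the
kernel of `π`; (2) the induced map on `V` preserves the edge and non-edge relations of the
Johnson graph; and (3) every permutation of ℚ lifts to an automorphism of `𝔜`. -/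
theorem Y_finite_cover_of_johnson :
    (∀ e : Ydom → Ydom, IsHomY e →
      ∀ u v : Ydom, piY u = piY v → piY (e u) = piY (e v)) ∧
    (∀ e : Ydom → Ydom, IsHomY e → ∀ x y : JVert,
      ((x.1 ∩ y.1).card = 1 →
        ((piY (e (toY x))).1 ∩ (piY (e (toY y))).1).card = 1) ∧
      (x.1 ∩ y.1 = ∅ → (piY (e (toY x))).1 ∩ (piY (e (toY y))).1 = ∅)) ∧
    (∀ α : Equiv.Perm ℚ, ∃ γ : Equiv.Perm Ydom,
      IsHomY ⇑γ ∧ IsHomY ⇑γ.symm ∧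
      ∀ y : Ydom, (piY (γ y)).1 = (piY y).1.image α) := by
  refine ⟨hom_kernel, johnson_part, ?_⟩
  intro α
  refine ⟨⟨liftMap α 1, liftMap α.symm 3,
    liftMap_leftInv α α.symm (fun q => α.symm_apply_apply q) (by decide),
    liftMap_leftInv α.symm α (fun q => α.apply_symm_apply q) (by decide)⟩,
    liftMap_isHom α (Or.inl rfl), liftMap_isHom α.symm (Or.inr rfl), ?_⟩
  intro y
  show (piY (liftMap α 1 y)).1 = (piY y).1.image α
  rw [piY_val, piY_val, liftMap_pair]
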